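/- Every automorphism of Λ_m preserving the linear span S of the primitive idempotents e_1,...,e_m either fixes all the idempotents or interchanges e_1 and e_2 while fixing e_3,...,e_m. -/

import Mathlib

/-- Generators of the algebra `Λ_m`: the vertex idempotents `e_i` (`i = 1,…,m`,
here `0`-indexed), the arrows `α₁ : 3 → 1`, `α₂ : 3 → 2`, `δ₁ : 1 → m`,
`δ₂ : 2 → m` and the arrows `β_i : i → i-1` for `4 ≤ i ≤ m` (here the
generators `β j` with `j.val < 3` are junk and are killed by a relation). -/
inductive LamGen (m : ℕ) where
  | e : Fin m → LamGen m
  | α : Fin 2 → LamGen m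
  | δ : Fin 2 → LamGen m
  | β : Fin m → LamGen m

namespace LamGen

/-- The generator is an arrow (not a vertex idempotent). -/
def IsArrow {m : ℕ} : LamGen m → Prop
  | e _ => False
  | _ => True

variable (k : Type*) [Field k] (m : ℕ) (hm : 4 ≤ m)

open FreeAlgebra

/-- The defining relations of `Λ_m`, as a relation on the free algebra on the
generators: the path-algebra relations for the quiver `Q_m` (orthogonal idempotents
summing to `1`, source/target relations for the arrows), the commutativity relation
`α₁δ₁ = α₂δ₂` and the vanishing of all paths of length `m`.  Multiplication is
written in path order (`αβ` means “first `α`, then `β`”). -/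
inductive Rel : FreeAlgebra k (LamGen m) → FreeAlgebra k (LamGen m) → Prop
  | idem (i j : Fin m) :
      Rel (ι k (e i) * ι k (e j)) (if i = j then ι k (e i) else 0)
  | sum_one : Rel (∑ i : Fin m, ι k (e i)) 1
  | alpha_src (i : Fin 2) :
      Rel (ι k (e ⟨2, by omega⟩) * ι k (α i)) (ι k (α i))
  | alpha_tgt (i : Fin 2) :
      Rel (ι k (α i) * ι k (e ⟨i.val, by omega⟩)) (ι k (α i))
  | delta_src (i : Fin 2) :
      Rel (ι k (e ⟨i.val, by omega⟩) * ι k (δ i)) (ι k (δ i))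
  | delta_tgt (i : Fin 2) :
      Rel (ι k (δ i) * ι k (e ⟨m - 1, by omega⟩)) (ι k (δ i))
  | beta_junk (j : Fin m) (h : j.val < 3) : Rel (ι k (β j)) 0
  | beta_src (j : Fin m) (h : 3 ≤ j.val) :
      Rel (ι k (e j) * ι k (β j)) (ι k (β j))
  | beta_tgt (j : Fin m) (h : 3 ≤ j.val) :
      Rel (ι k (β j) * ι k (e ⟨j.val - 1, by omega⟩)) (ι k (β j))
  | comm : Rel (ι k (α 0) * ι k (δ 0)) (ι k (α 1) * ι k (δ 1))
  | long (w : Fin m → LamGen m) (hw : ∀ n, IsArrow (w n)) :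
      Rel ((List.ofFn fun n : Fin m => ι k (w n)).prod) 0

end LamGen

/-- The symmetric representation-finite algebra `Λ_m` of type `D_m`
(the Double Edge algebra of the star with `m-2` regular edges and a double edge). -/
abbrev Lam (k : Type*) [Field k] (m : ℕ) (hm : 4 ≤ m) :=
  RingQuot (LamGen.Rel k m hm)

namespace LamGen

variable (k : Type*) [Field k] (m : ℕ) (hm : 4 ≤ m)

/-- The canonical projection onto `Λ_m`. -/
noncomputable def π : FreeAlgebra k (LamGen m) →ₐ[k] Lam k m hm :=
  RingQuot.mkAlgHom k (Rel k m hm)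

/-- The vertex idempotents `e_i ∈ Λ_m`. -/
noncomputable def eL (i : Fin m) : Lam k m hm := π k m hm (FreeAlgebra.ι k (e i))

/-- The arrows `α_i ∈ Λ_m`. -/
noncomputable def αL (i : Fin 2) : Lam k m hm := π k m hm (FreeAlgebra.ι k (α i))

/-- The arrows `δ_i ∈ Λ_m`. -/
noncomputable def δL (i : Fin 2) : Lam k m hm := π k m hm (FreeAlgebra.ι k (δ i))

/-- The arrows `β_j ∈ Λ_m`. -/
noncomputable def βL (j : Fin m) : Lam k m hm := π k m hm (FreeAlgebra.ι k (β j))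

end LamGen

open LamGen




namespace S4
open LamGen FreeAlgebra

/-- The genuine arrows of the quiver, with source and target. -/
inductive Arr (n : ℕ) (hn : 4 ≤ n) : Fin n → LamGen n → Fin n → Prop
  | alpha (t : Fin 2) : Arr n hn ⟨2, by omega⟩ (.α t) ⟨t.val, by omega⟩
  | delta (t : Fin 2) : Arr n hn ⟨t.val, by omega⟩ (.δ t) ⟨n - 1, by omega⟩
  | beta (j : Fin n) (h : 3 ≤ j.val) : Arr n hn j (.β j) ⟨j.val - 1, by omega⟩


/-- Position of a vertex on the cycle of length `m-1`. -/
def pos (m : ℕ) (v : Fin m) : ℕ :=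
  if v.val = 2 then 0 else if v.val ≤ 1 then 1 else m + 1 - v.val

/-- Distance from `i` to `j` along the cycle. -/
def Dd (m : ℕ) (i j : Fin m) : ℕ :=
  if i = j then 0
  else if pos m i < pos m j then pos m j - pos m i
  else m - 1 - (pos m i - pos m j)

/-- Paths in the quiver. -/
inductive IsPath (n : ℕ) (hn : 4 ≤ n) : Fin n → List (LamGen n) → Fin n → Prop
  | nil (i : Fin n) : IsPath n hn i [] i
  | cons {i j l : Fin n} {g : LamGen n} {w : List (LamGen n)} :
      Arr n hn i g j → IsPath n hn j w l → IsPath n hn i (g :: w) l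

section
variable (k : Type*) [Field k] (m : ℕ) (hm : 4 ≤ m)

noncomputable def gL (g : LamGen m) : Lam k m hm := π k m hm (FreeAlgebra.ι k g)

variable {k m hm}

theorem prel {x y : FreeAlgebra k (LamGen m)} (h : Rel k m hm x y) :
    π k m hm x = π k m hm y := RingQuot.mkAlgHom_rel k h

theorem gL_e (i : Fin m) : gL k m hm (e i) = eL k m hm i := rfl

theorem e_mul_e (i j : Fin m) :
    gL k m hm (e i) * gL k m hm (e j) = if i = j then gL k m hm (e i) else 0 := by
  have h := prel (Rel.idem (k := k) (m := m) (hm := hm) i j)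
  rw [map_mul, apply_ite (π k m hm), map_zero] at h
  exact h

theorem sum_e : (∑ i : Fin m, gL k m hm (e i)) = 1 := by
  have h := prel (Rel.sum_one (k := k) (m := m) (hm := hm))
  rw [map_sum, map_one] at h
  exact h

theorem Arr.isArrow {i j : Fin m} {g : LamGen m} (h : Arr m hm i g j) : IsArrow g := by
  cases h <;> trivial

theorem Arr.src_mul {i j : Fin m} {g : LamGen m} (h : Arr m hm i g j) :
    gL k m hm (e i) * gL k m hm g = gL k m hm g := by
  cases h with
  | alpha t => have h := prel (Rel.alpha_src (k := k) (m := m) (hm := hm) t); rw [map_mul] at h; exact h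
  | delta t => have h := prel (Rel.delta_src (k := k) (m := m) (hm := hm) t); rw [map_mul] at h; exact h
  | beta hb => have hb2 : 3 ≤ i.val := by assumption
               have h := prel (Rel.beta_src (k := k) (m := m) (hm := hm) i hb2); rw [map_mul] at h; exact h

theorem Arr.mul_tgt {i j : Fin m} {g : LamGen m} (h : Arr m hm i g j) :
    gL k m hm g * gL k m hm (e j) = gL k m hm g := by
  cases h with
  | alpha t => have h := prel (Rel.alpha_tgt (k := k) (m := m) (hm := hm) t); rw [map_mul] at h; exact h
  | delta t => have h := prel (Rel.delta_tgt (k := k) (m := m) (hm := hm) t); rw [map_mul] at h; exact h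
  | beta hb => have hb2 : 3 ≤ i.val := by assumption
               have h := prel (Rel.beta_tgt (k := k) (m := m) (hm := hm) i hb2); rw [map_mul] at h; exact h

theorem IsPath.append {i j l : Fin m} {w w' : List (LamGen m)}
    (h : IsPath m hm i w j) (h' : IsPath m hm j w' l) : IsPath m hm i (w ++ w') l := by
  induction h with
  | nil => exact h'
  | cons ha _ ih => exact .cons ha (ih h')

theorem IsPath.arrows {i j : Fin m} {w : List (LamGen m)} (h : IsPath m hm i w j) :
    ∀ g ∈ w, IsArrow g := by
  induction h with
  | nil => intro g hg; simp at hg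
  | cons ha _ ih =>
    intro g hg
    rcases List.mem_cons.mp hg with h1 | h2
    · subst h1; exact Arr.isArrow ha
    · exact ih g h2

variable (k) in
noncomputable def prodL (w : List (LamGen m)) (hm : 4 ≤ m) : Lam k m hm :=
  (w.map (gL k m hm)).prod

variable (k) in
noncomputable def pathL (i : Fin m) (w : List (LamGen m)) (hm : 4 ≤ m) : Lam k m hm :=
  gL k m hm (e i) * prodL k w hm

theorem prodL_append (w w' : List (LamGen m)) :
    prodL k (w ++ w') hm = prodL k w hm * prodL k w' hm := by
  simp [prodL]

theorem pathL_nil (i : Fin m) : pathL k i [] hm = gL k m hm (e i) := by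
  simp [pathL, prodL]

theorem pathL_cons {i j : Fin m} {g : LamGen m} (h : Arr m hm i g j) (w : List (LamGen m)) :
    pathL k i (g :: w) hm = gL k m hm g * pathL k j w hm := by
  unfold pathL prodL
  rw [List.map_cons, List.prod_cons, ← mul_assoc, Arr.src_mul h, ← mul_assoc, Arr.mul_tgt h]

theorem pathL_mul_e {i j : Fin m} {w : List (LamGen m)} (h : IsPath m hm i w j) :
    pathL k i w hm * gL k m hm (e j) = pathL k i w hm := by
  induction h with
  | nil i => rw [pathL_nil, e_mul_e, if_pos rfl]
  | cons ha hp ih => rw [pathL_cons ha, mul_assoc, ih]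

theorem e_mul_pathL (i' i : Fin m) (w : List (LamGen m)) :
    gL k m hm (e i') * pathL k i w hm = if i' = i then pathL k i w hm else 0 := by
  unfold pathL
  rw [← mul_assoc, e_mul_e]
  split_ifs with h
  · rw [h]
  · rw [zero_mul]

theorem pathL_mul_prodL {i j : Fin m} {w : List (LamGen m)} (h : IsPath m hm i w j)
    (x : Lam k m hm) :
    pathL k i w hm * (gL k m hm (e j) * x) = pathL k i w hm * x := by
  rw [← mul_assoc, pathL_mul_e h]

theorem pathL_mul_pathL {i j l : Fin m} {w w' : List (LamGen m)}
    (h : IsPath m hm i w j) (h' : IsPath m hm j w' l) :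
    pathL k i w hm * pathL k j w' hm = pathL k i (w ++ w') hm := by
  rw [show pathL k j w' hm = gL k m hm (e j) * prodL k w' hm from rfl, pathL_mul_prodL h]
  show gL k m hm (e i) * prodL k w hm * prodL k w' hm = _
  rw [mul_assoc, ← prodL_append]
  rfl

theorem pathL_mul_pathL_ne {i j j' : Fin m} {w w' : List (LamGen m)}
    (h : IsPath m hm i w j) (hne : j ≠ j') :
    pathL k i w hm * pathL k j' w' hm = 0 := by
  conv_lhs => rw [← pathL_mul_e h]
  rw [show pathL k j' w' hm = gL k m hm (e j') * prodL k w' hm from rfl,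
      mul_assoc, ← mul_assoc (gL k m hm (e j)), e_mul_e, if_neg hne, zero_mul, mul_zero]

theorem pos_lt (hm4 : 4 ≤ m) (v : Fin m) : pos m v < m - 1 := by
  have := v.isLt; unfold pos; split_ifs <;> omega

theorem arr_pos {i j : Fin m} {g : LamGen m} (h : Arr m hm i g j) :
    ∃ c, pos m i + 1 = pos m j + (m - 1) * c := by
  have hm4 : 4 ≤ m := hm
  cases h with
  | alpha t => refine ⟨0, ?_⟩; have := t.isLt; simp only [pos]; split_ifs <;> omega
  | delta t => refine ⟨0, ?_⟩; have := t.isLt; simp only [pos]; split_ifs <;> omega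
  | beta hb =>
      have hb2 : 3 ≤ i.val := by assumption
      have hi := i.isLt
      refine ⟨if i.val = 3 then 1 else 0, ?_⟩
      simp only [pos]; split_ifs <;> omega

theorem path_pos {i j : Fin m} {w : List (LamGen m)} (h : IsPath m hm i w j) :
    ∃ c, pos m i + w.length = pos m j + (m - 1) * c := by
  induction h with
  | nil i => exact ⟨0, by simp⟩
  | cons ha hp ih =>
    obtain ⟨c1, hc1⟩ := arr_pos ha
    obtain ⟨c2, hc2⟩ := ih
    exact ⟨c1 + c2, by rw [Nat.mul_add]; simp only [List.length_cons]; omega⟩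

theorem Dd_le (hm4 : 4 ≤ m) (i j : Fin m) : Dd m i j ≤ m - 1 := by
  have h1 := pos_lt hm4 i; have h2 := pos_lt hm4 j
  unfold Dd; split_ifs <;> omega

theorem Dd_eq_zero_iff (hm4 : 4 ≤ m) {i j : Fin m} : Dd m i j = 0 ↔ i = j := by
  have h1 := pos_lt hm4 i; have h2 := pos_lt hm4 j
  constructor
  · intro h0
    by_contra hne
    simp only [Dd, if_neg hne] at h0
    split_ifs at h0 <;> omega
  · intro h; simp [Dd, h]

theorem Dd_pos_eq (hm4 : 4 ≤ m) (i j : Fin m) :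
    ∃ c ≤ 1, pos m i + Dd m i j = pos m j + (m - 1) * c := by
  have h1 := pos_lt hm4 i; have h2 := pos_lt hm4 j
  by_cases hij : i = j
  · exact ⟨0, by omega, by simp [hij, Dd]⟩
  · simp only [Dd, if_neg hij]
    split_ifs with h
    · exact ⟨0, by omega, by omega⟩
    · exact ⟨1, le_refl 1, by omega⟩

theorem Dd_le_length (hm4 : 4 ≤ m) {i j : Fin m} {w : List (LamGen m)}
    (h : IsPath m hm i w j) : Dd m i j ≤ w.length := by
  obtain ⟨c, hc⟩ := path_pos h
  have hpi := pos_lt hm4 i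
  have hpj := pos_lt hm4 j
  by_cases hij : i = j
  · simp [Dd, hij]
  · have hw : 1 ≤ w.length := by
      cases h with
      | nil => exact absurd rfl hij
      | cons _ _ => simp
    simp only [Dd, if_neg hij]
    rcases c with _ | c
    · split_ifs <;> omega
    · have hmc : m - 1 ≤ (m - 1) * (c + 1) := Nat.le_mul_of_pos_right _ (by omega)
      split_ifs <;> omega

theorem prodL_zero_of_len (l : List (LamGen m)) (hlen : l.length = m)
    (harr : ∀ g ∈ l, IsArrow g) : prodL k l hm = 0 := by
  have key : π k m hm ((l.map (FreeAlgebra.ι k)).prod) = 0 := by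
    have h0 := prel (Rel.long (k := k) (m := m) (hm := hm)
      (fun n => l.get (Fin.cast hlen.symm n)) (fun n => harr _ (by apply List.get_mem)))
    rw [map_zero] at h0
    have hl : List.map (FreeAlgebra.ι k) l =
        (List.ofFn fun n : Fin m => FreeAlgebra.ι k (l.get (Fin.cast hlen.symm n))) := by
      apply List.ext_getElem
      · simp [hlen]
      · intro n h1 h2
        simp [List.getElem_ofFn]
    rw [hl]
    exact h0
  have h2 : prodL k l hm = π k m hm ((l.map (FreeAlgebra.ι k)).prod) := by
    rw [map_list_prod, List.map_map]; rfl
  rw [h2, key]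

theorem pathL_zero_of_long {i j : Fin m} {w : List (LamGen m)}
    (h : IsPath m hm i w j) (hw : m ≤ w.length) : pathL k i w hm = 0 := by
  have hsplit : w = w.take m ++ w.drop m := (List.take_append_drop m w).symm
  have htlen : (w.take m).length = m := by rw [List.length_take]; omega
  have hz : prodL k (w.take m) hm = 0 :=
    prodL_zero_of_len (w.take m) htlen
      (fun g hg => h.arrows g (List.take_subset m w hg))
  have hsp : prodL k w hm = prodL k (w.take m) hm * prodL k (w.drop m) hm := by
    conv_lhs => rw [hsplit]
    exact prodL_append _ _
  rw [show pathL k i w hm = gL k m hm (e i) * prodL k w hm from rfl, hsp, hz, zero_mul, mul_zero]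

variable (k m hm) in
/-- The set of (images of) paths in `Λ`. -/
noncomputable def PathSet : Set (Lam k m hm) :=
  {x | ∃ i w j, IsPath m hm i w j ∧ x = pathL k i w hm}

variable (k m hm) in
/-- The set of (images of) paths from `i` to `j` in `Λ`. -/
noncomputable def HomSet (i j : Fin m) : Set (Lam k m hm) :=
  {z | ∃ w, IsPath m hm i w j ∧ z = pathL k i w hm}

theorem one_mem_span : (1 : Lam k m hm) ∈ Submodule.span k (PathSet k m hm) := by
  rw [← sum_e]
  refine Submodule.sum_mem _ fun i _ => Submodule.subset_span ?_
  exact ⟨i, [], i, IsPath.nil i, (pathL_nil i).symm⟩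

theorem mul_mem_span {x y : Lam k m hm} (hx : x ∈ Submodule.span k (PathSet k m hm))
    (hy : y ∈ Submodule.span k (PathSet k m hm)) :
    x * y ∈ Submodule.span k (PathSet k m hm) := by
  refine Submodule.span_induction
    (p := fun x _ => x * y ∈ Submodule.span k (PathSet k m hm)) ?_ ?_ ?_ ?_ hx
  · rintro x ⟨i, w, j, hw, rfl⟩
    refine Submodule.span_induction
      (p := fun y _ => pathL k i w hm * y ∈ Submodule.span k (PathSet k m hm)) ?_ ?_ ?_ ?_ hy
    · rintro y ⟨i', w', j', hw', rfl⟩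
      by_cases hjj : j = i'
      · subst hjj
        rw [pathL_mul_pathL hw hw']
        exact Submodule.subset_span ⟨i, w ++ w', j', hw.append hw', rfl⟩
      · rw [pathL_mul_pathL_ne hw hjj]; exact Submodule.zero_mem _
    · show pathL k i w hm * 0 ∈ Submodule.span k (PathSet k m hm)
      rw [mul_zero]; exact Submodule.zero_mem _
    · intro a b _ _ ha hb; rw [mul_add]; exact Submodule.add_mem _ ha hb
    · intro c a _ ha; rw [mul_smul_comm]; exact Submodule.smul_mem _ c ha
  · show (0 : Lam k m hm) * y ∈ Submodule.span k (PathSet k m hm)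
    rw [zero_mul]; exact Submodule.zero_mem _
  · intro a b _ _ ha hb; rw [add_mul]; exact Submodule.add_mem _ ha hb
  · intro c a _ ha; rw [smul_mul_assoc]; exact Submodule.smul_mem _ c ha

theorem mem_span_paths (x : Lam k m hm) : x ∈ Submodule.span k (PathSet k m hm) := by
  obtain ⟨y, rfl⟩ := RingQuot.mkAlgHom_surjective k (Rel k m hm) x
  induction y using FreeAlgebra.induction with
  | grade0 r =>
      rw [AlgHom.commutes, Algebra.algebraMap_eq_smul_one]
      exact Submodule.smul_mem _ r one_mem_span
  | grade1 g =>
      cases g with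
      | e i => exact Submodule.subset_span ⟨i, [], i, IsPath.nil i, (pathL_nil i).symm⟩
      | α t =>
          refine Submodule.subset_span ⟨⟨2, by omega⟩, [.α t], ⟨t.val, by omega⟩,
            IsPath.cons (Arr.alpha t) (IsPath.nil _), ?_⟩
          rw [pathL_cons (Arr.alpha t), pathL_nil, Arr.mul_tgt (Arr.alpha t)]
          rfl
      | δ t =>
          refine Submodule.subset_span ⟨⟨t.val, by omega⟩, [.δ t], ⟨m - 1, by omega⟩,
            IsPath.cons (Arr.delta t) (IsPath.nil _), ?_⟩
          rw [pathL_cons (Arr.delta t), pathL_nil, Arr.mul_tgt (Arr.delta t)]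
          rfl
      | β b =>
          by_cases hb : 3 ≤ b.val
          · refine Submodule.subset_span ⟨b, [.β b], ⟨b.val - 1, by omega⟩,
              IsPath.cons (Arr.beta b hb) (IsPath.nil _), ?_⟩
            rw [pathL_cons (Arr.beta b hb), pathL_nil, Arr.mul_tgt (Arr.beta b hb)]
            rfl
          · have hz := prel (Rel.beta_junk (k := k) (m := m) (hm := hm) b (by omega))
            rw [map_zero] at hz
            show π k m hm (FreeAlgebra.ι k (.β b)) ∈ _
            rw [hz]
            exact Submodule.zero_mem _
  | mul a b iha ihb => rw [map_mul]; exact mul_mem_span iha ihb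
  | add a b iha ihb => rw [map_add]; exact Submodule.add_mem _ iha ihb

theorem sandwich (i j : Fin m) (x : Lam k m hm) :
    gL k m hm (e i) * x * gL k m hm (e j) ∈ Submodule.span k (HomSet k m hm i j) := by
  refine Submodule.span_induction
    (p := fun x _ => gL k m hm (e i) * x * gL k m hm (e j) ∈
      Submodule.span k (HomSet k m hm i j)) ?_ ?_ ?_ ?_ (mem_span_paths x)
  · rintro z ⟨a, w, b, hw, rfl⟩
    rw [e_mul_pathL]
    split_ifs with hia
    · subst hia
      rw [← pathL_mul_e hw, mul_assoc, e_mul_e]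
      split_ifs with hbj
      · subst hbj
        rw [pathL_mul_e hw]
        exact Submodule.subset_span ⟨w, hw, rfl⟩
      · rw [mul_zero]; exact Submodule.zero_mem _
    · rw [zero_mul]; exact Submodule.zero_mem _
  · show gL k m hm (e i) * 0 * gL k m hm (e j) ∈ Submodule.span k (HomSet k m hm i j)
    rw [mul_zero, zero_mul]; exact Submodule.zero_mem _
  · intro a b _ _ ha hb; rw [mul_add, add_mul]; exact Submodule.add_mem _ ha hb
  · intro c a _ ha; rw [mul_smul_comm, smul_mul_assoc]; exact Submodule.smul_mem _ c ha

theorem triple_zero {i j l : Fin m} (hD : m ≤ Dd m i j + Dd m j l)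
    (x y : Lam k m hm) :
    gL k m hm (e i) * x * gL k m hm (e j) * y * gL k m hm (e l) = 0 := by
  have hx := sandwich i j x
  have hy := sandwich j l y
  have key : ∀ u ∈ Submodule.span k (HomSet k m hm i j),
      ∀ v ∈ Submodule.span k (HomSet k m hm j l), u * v = 0 := by
    intro u hu
    refine Submodule.span_induction
      (p := fun u _ => ∀ v ∈ Submodule.span k (HomSet k m hm j l), u * v = 0) ?_ ?_ ?_ ?_ hu
    · rintro z ⟨w, hw, rfl⟩ v hv
      refine Submodule.span_induction
        (p := fun v _ => pathL k i w hm * v = 0) ?_ ?_ ?_ ?_ hv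
      · rintro z' ⟨w', hw', rfl⟩
        rw [pathL_mul_pathL hw hw']
        refine pathL_zero_of_long (hw.append hw') ?_
        have h1 := Dd_le_length hm hw
        have h2 := Dd_le_length hm hw'
        rw [List.length_append]; omega
      · show pathL k i w hm * 0 = 0
        rw [mul_zero]
      · intro a b _ _ ha hb; rw [mul_add, ha, hb, add_zero]
      · intro c a _ ha; rw [mul_smul_comm, ha, smul_zero]
    · intro v _; show (0 : Lam k m hm) * v = 0; rw [zero_mul]
    · intro a b _ _ ha hb v hv; rw [add_mul, ha v hv, hb v hv, add_zero]
    · intro c a _ ha v hv; rw [smul_mul_assoc, ha v hv, smul_zero]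
  have hA : gL k m hm (e i) * x * gL k m hm (e j) * gL k m hm (e j)
      = gL k m hm (e i) * x * gL k m hm (e j) := by
    rw [mul_assoc (gL k m hm (e i) * x), e_mul_e, if_pos rfl]
  have heq : gL k m hm (e i) * x * gL k m hm (e j) * y * gL k m hm (e l)
      = (gL k m hm (e i) * x * gL k m hm (e j)) * (gL k m hm (e j) * y * gL k m hm (e l)) := by
    rw [← mul_assoc, ← mul_assoc, hA]
  rw [heq]
  exact key _ hx _ hy

end

section RepSec

variable (k : Type*) [Field k] (m : ℕ) (hm : 4 ≤ m)

/-- The representation space: basis indexed by (level, vertex). -/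
abbrev VV := Fin m × Fin m → k

/-- Action of the idempotent `e v`: projection onto coordinates at vertex `v`. -/
def eMap (v : Fin m) : VV k m →ₗ[k] VV k m where
  toFun φ := fun p => if p.2 = v then φ p else 0
  map_add' φ ψ := by funext p; by_cases h : p.2 = v <;> simp [h]
  map_smul' c φ := by funext p; by_cases h : p.2 = v <;> simp [h]

/-- (Reverse) action of an arrow `i → j`: reads vertex `j` at one level down,
writes vertex `i`. -/
def aMap (i j : Fin m) : VV k m →ₗ[k] VV k m where
  toFun φ := fun p => if p.2 = i ∧ 0 < p.1.val then
      φ (⟨p.1.val - 1, Nat.lt_of_le_of_lt (Nat.sub_le _ _) p.1.isLt⟩, j) else 0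
  map_add' φ ψ := by
    funext p; by_cases h : p.2 = i ∧ 0 < p.1.val <;> simp [h]
  map_smul' c φ := by
    funext p; by_cases h : p.2 = i ∧ 0 < p.1.val <;> simp [h]

/-- The representation on generators. -/
def rep : LamGen m → (VV k m →ₗ[k] VV k m)
  | .e v => eMap k m v
  | .α t => aMap k m ⟨2, by omega⟩ ⟨t.val, by omega⟩
  | .δ t => aMap k m ⟨t.val, by omega⟩ ⟨m - 1, by omega⟩
  | .β b => if h : 3 ≤ b.val then aMap k m b ⟨b.val - 1, by omega⟩ else 0

variable {k m hm}

theorem eMap_apply (v : Fin m) (φ : VV k m) (p) :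
    eMap k m v φ p = if p.2 = v then φ p else 0 := rfl

theorem aMap_apply (i j : Fin m) (φ : VV k m) (p) :
    aMap k m i j φ p = if p.2 = i ∧ 0 < p.1.val then
      φ (⟨p.1.val - 1, Nat.lt_of_le_of_lt (Nat.sub_le _ _) p.1.isLt⟩, j) else 0 := rfl

theorem rep_arr {i j : Fin m} {g : LamGen m} (h : Arr m hm i g j) :
    rep k m hm g = aMap k m i j := by
  cases h with
  | alpha t => rfl
  | delta t => rfl
  | beta hb =>
      have hb2 : 3 ≤ i.val := by assumption
      show (if h : 3 ≤ i.val then _ else _) = _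
      rw [dif_pos hb2]

theorem aMap_van {i j : Fin m} {n : ℕ} {φ : VV k m}
    (h : ∀ p : Fin m × Fin m, p.1.val < n → φ p = 0) :
    ∀ p : Fin m × Fin m, p.1.val < n + 1 → aMap k m i j φ p = 0 := by
  intro p hp
  rw [aMap_apply]
  split_ifs with hc
  · refine h _ ?_
    show p.1.val - 1 < n
    omega
  · rfl

theorem rep_van {g : LamGen m} (hg : IsArrow g) {n : ℕ} {φ : VV k m}
    (h : ∀ p : Fin m × Fin m, p.1.val < n → φ p = 0) :
    ∀ p : Fin m × Fin m, p.1.val < n + 1 → rep k m hm g φ p = 0 := by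
  cases g with
  | e v => exact hg.elim
  | α t => exact aMap_van h
  | δ t => exact aMap_van h
  | β b =>
      by_cases hb : 3 ≤ b.val
      · rw [show rep k m hm (.β b) = aMap k m b ⟨b.val - 1, by omega⟩ from by
          show (if h : 3 ≤ b.val then _ else _) = _; rw [dif_pos hb]]
        exact aMap_van h
      · rw [show rep k m hm (.β b) = 0 from by
          show (if h : 3 ≤ b.val then _ else _) = _; rw [dif_neg hb]]
        intro p _; rfl

theorem prod_van (L : List (Module.End k (VV k m)))
    (hL : ∀ A ∈ L, ∀ (n : ℕ) (φ : VV k m), (∀ p : Fin m × Fin m, p.1.val < n → φ p = 0) →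
      ∀ p : Fin m × Fin m, p.1.val < n + 1 → (A φ) p = 0)
    (n0 : ℕ) (φ : VV k m) (hφ : ∀ p : Fin m × Fin m, p.1.val < n0 → φ p = 0) :
    ∀ p : Fin m × Fin m, p.1.val < n0 + L.length → (L.prod φ) p = 0 := by
  induction L generalizing φ n0 with
  | nil => intro p hp; simp only [List.prod_nil, Module.End.one_apply]; exact hφ p (by simpa using hp)
  | cons A T ih =>
      intro p hp
      rw [List.prod_cons, Module.End.mul_apply]
      refine hL A (by simp) (n0 + T.length) (T.prod φ) ?_ p (by simp at hp ⊢; omega)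
      exact ih (fun B hB => hL B (by simp [hB])) n0 φ hφ

theorem rep_rel : ∀ ⦃x y : FreeAlgebra k (LamGen m)⦄, Rel k m hm x y →
    (FreeAlgebra.lift k (rep k m hm)) x = (FreeAlgebra.lift k (rep k m hm)) y := by
  intro x y h
  cases h with
  | idem i j =>
      rw [map_mul, apply_ite (FreeAlgebra.lift k (rep k m hm)), map_zero]
      simp only [FreeAlgebra.lift_ι_apply]
      show eMap k m i * eMap k m j = if i = j then eMap k m i else 0
      by_cases hij : i = j
      · subst hij
        rw [if_pos rfl]
        apply LinearMap.ext; intro φ; funext p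
        rw [Module.End.mul_apply, eMap_apply, eMap_apply]
        split_ifs <;> rfl
      · rw [if_neg hij]
        apply LinearMap.ext; intro φ; funext p
        rw [Module.End.mul_apply, eMap_apply, eMap_apply]
        simp only [LinearMap.zero_apply, Pi.zero_apply]
        split_ifs <;> first | rfl | simp_all
  | sum_one =>
      rw [map_sum, map_one]
      simp only [FreeAlgebra.lift_ι_apply]
      apply LinearMap.ext; intro φ; funext p
      show (∑ i : Fin m, eMap k m i) φ p = φ p
      rw [LinearMap.sum_apply]
      have : (∑ i : Fin m, eMap k m i φ) p = ∑ i : Fin m, eMap k m i φ p := by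
        rw [Finset.sum_apply]
      rw [this]
      simp only [eMap_apply]
      rw [Finset.sum_ite_eq Finset.univ p.2 (fun _ => φ p)]
      simp
  | alpha_src t =>
      rw [map_mul]
      simp only [FreeAlgebra.lift_ι_apply]
      show eMap k m ⟨2, by omega⟩ * rep k m hm (.α t) = rep k m hm (.α t)
      rw [rep_arr (Arr.alpha (hn := hm) t)]
      apply LinearMap.ext; intro φ; funext p
      simp only [Module.End.mul_apply, eMap_apply, aMap_apply]
      split_ifs <;> first | rfl | simp_all
  | alpha_tgt t =>
      rw [map_mul]
      simp only [FreeAlgebra.lift_ι_apply]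
      show rep k m hm (.α t) * eMap k m ⟨t.val, by omega⟩ = rep k m hm (.α t)
      rw [rep_arr (Arr.alpha (hn := hm) t)]
      apply LinearMap.ext; intro φ; funext p
      simp only [Module.End.mul_apply, eMap_apply, aMap_apply]
      split_ifs <;> first | rfl | simp_all
  | delta_src t =>
      rw [map_mul]
      simp only [FreeAlgebra.lift_ι_apply]
      show eMap k m ⟨t.val, by omega⟩ * rep k m hm (.δ t) = rep k m hm (.δ t)
      rw [rep_arr (Arr.delta (hn := hm) t)]
      apply LinearMap.ext; intro φ; funext p
      simp only [Module.End.mul_apply, eMap_apply, aMap_apply]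
      split_ifs <;> first | rfl | simp_all
  | delta_tgt t =>
      rw [map_mul]
      simp only [FreeAlgebra.lift_ι_apply]
      show rep k m hm (.δ t) * eMap k m ⟨m - 1, by omega⟩ = rep k m hm (.δ t)
      rw [rep_arr (Arr.delta (hn := hm) t)]
      apply LinearMap.ext; intro φ; funext p
      simp only [Module.End.mul_apply, eMap_apply, aMap_apply]
      split_ifs <;> first | rfl | simp_all
  | beta_junk b hb =>
      rw [map_zero]
      simp only [FreeAlgebra.lift_ι_apply]
      show (if h : 3 ≤ b.val then _ else _) = (0 : VV k m →ₗ[k] VV k m)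
      rw [dif_neg (by omega)]
  | beta_src b hb =>
      rw [map_mul]
      simp only [FreeAlgebra.lift_ι_apply]
      show eMap k m b * rep k m hm (.β b) = rep k m hm (.β b)
      rw [rep_arr (Arr.beta (hn := hm) b hb)]
      apply LinearMap.ext; intro φ; funext p
      simp only [Module.End.mul_apply, eMap_apply, aMap_apply]
      split_ifs <;> first | rfl | simp_all
  | beta_tgt b hb =>
      rw [map_mul]
      simp only [FreeAlgebra.lift_ι_apply]
      show rep k m hm (.β b) * eMap k m ⟨b.val - 1, by omega⟩ = rep k m hm (.β b)
      rw [rep_arr (Arr.beta (hn := hm) b hb)]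
      apply LinearMap.ext; intro φ; funext p
      simp only [Module.End.mul_apply, eMap_apply, aMap_apply]
      split_ifs <;> first | rfl | simp_all
  | comm =>
      rw [map_mul, map_mul]
      simp only [FreeAlgebra.lift_ι_apply]
      show rep k m hm (.α 0) * rep k m hm (.δ 0) = rep k m hm (.α 1) * rep k m hm (.δ 1)
      rw [rep_arr (Arr.alpha (hn := hm) 0), rep_arr (Arr.delta (hn := hm) 0),
        rep_arr (Arr.alpha (hn := hm) 1), rep_arr (Arr.delta (hn := hm) 1)]
      apply LinearMap.ext; intro φ; funext p
      simp only [Module.End.mul_apply, aMap_apply]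
      all_goals split_ifs <;> first | rfl | simp_all
  | long w hw =>
      rw [map_zero, map_list_prod]
      have hmap : List.map (FreeAlgebra.lift k (rep k m hm))
          (List.ofFn fun n : Fin m => FreeAlgebra.ι k (w n))
          = List.ofFn fun n : Fin m => rep k m hm (w n) := by
        rw [List.map_ofFn]
        congr 1
        funext n
        simp [Function.comp, FreeAlgebra.lift_ι_apply]
      rw [hmap]
      apply LinearMap.ext; intro φ; funext p
      have := prod_van (List.ofFn fun n : Fin m => rep k m hm (w n))
        (by
          intro A hA n φ' hφ'
          obtain ⟨t, rfl⟩ := List.mem_ofFn.mp hA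
          exact rep_van (hw t) hφ')
        0 φ (by intro p hp; omega)
      simp only [List.length_ofFn, Nat.zero_add] at this
      exact this p p.1.isLt

/-- The representation of `Λ` itself. -/
noncomputable def Φ : Lam k m hm →ₐ[k] Module.End k (VV k m) :=
  RingQuot.liftAlgHom k ⟨FreeAlgebra.lift k (rep k m hm), rep_rel⟩

theorem Φ_gL (g : LamGen m) : Φ (gL k m hm g) = rep k m hm g := by
  show RingQuot.liftAlgHom k ⟨FreeAlgebra.lift k (rep k m hm), rep_rel⟩
      (RingQuot.mkAlgHom k (Rel k m hm) (FreeAlgebra.ι k g)) = _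
  rw [RingQuot.liftAlgHom_mkAlgHom_apply, FreeAlgebra.lift_ι_apply]

variable (k m) in
/-- Basis vector of the representation at (level, vertex). -/
def unitV (t v : Fin m) : VV k m := fun p => if p = (t, v) then 1 else 0

theorem eMap_unitV (u t v : Fin m) :
    eMap k m u (unitV k m t v) = if v = u then unitV k m t v else 0 := by
  funext p
  rw [eMap_apply]
  by_cases h1 : v = u <;> by_cases h2 : p = (t, v) <;>
    simp_all [unitV] <;> split_ifs <;> simp_all [Prod.ext_iff] <;> tauto

theorem aMap_unitV (i j t : Fin m) (ht : t.val + 1 < m) :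
    aMap k m i j (unitV k m t j) = unitV k m ⟨t.val + 1, ht⟩ i := by
  funext p
  rw [aMap_apply]
  simp only [unitV, Prod.ext_iff, Fin.ext_iff]
  split_ifs <;> simp_all <;> omega

end RepSec

section ActSec
variable {k : Type*} [Field k] {m : ℕ} {hm : 4 ≤ m}

theorem prodL_cons (g : LamGen m) (w : List (LamGen m)) :
    prodL k (g :: w) hm = gL k m hm g * prodL k w hm := by simp [prodL]

theorem Φ_prodL {i j : Fin m} {w : List (LamGen m)} (h : IsPath m hm i w j) (hw : w.length < m) :
    Φ (prodL k w hm) (unitV k m ⟨0, by omega⟩ j) = unitV k m ⟨w.length, hw⟩ i := by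
  induction h with
  | nil i =>
      show Φ (1 : Lam k m hm) _ = _
      rw [map_one]
      rfl
  | @cons i' j' l' g w' ha hp ih =>
      have hlen : w'.length < m := by simp only [List.length_cons] at hw; omega
      rw [prodL_cons, map_mul, Module.End.mul_apply, ih hlen, Φ_gL, rep_arr ha,
        aMap_unitV i' j' ⟨w'.length, hlen⟩ (by simpa using hw)]
      rfl

theorem pathL_ne_zero {i j : Fin m} {w : List (LamGen m)} (h : IsPath m hm i w j)
    (hw : w.length < m) : pathL k i w hm ≠ 0 := by
  have hm4 : 4 ≤ m := hm
  intro h0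
  have h1 : Φ (pathL k i w hm) (unitV k m ⟨0, by omega⟩ j) ((⟨w.length, hw⟩ : Fin m), i) = 1 := by
    rw [show pathL k i w hm = gL k m hm (e i) * prodL k w hm from rfl, map_mul,
      Module.End.mul_apply, Φ_prodL h hw, Φ_gL]
    show eMap k m i (unitV k m ⟨w.length, hw⟩ i) _ = 1
    rw [eMap_unitV, if_pos rfl]
    show (if ((⟨w.length, hw⟩, i) : Fin m × Fin m) = (⟨w.length, hw⟩, i) then (1 : k) else 0) = 1
    rw [if_pos rfl]
  rw [h0, map_zero] at h1
  simp at h1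

variable (k) in
/-- The `j`-th coordinate functional on the span of the idempotents. -/
noncomputable def coord (j : Fin m) (x : Lam k m hm) : k :=
  Φ x (unitV k m ⟨0, Nat.lt_of_le_of_lt (Nat.zero_le _) j.isLt⟩ j)
    ((⟨0, Nat.lt_of_le_of_lt (Nat.zero_le _) j.isLt⟩ : Fin m), j)

theorem coord_zero (j : Fin m) : coord k j (0 : Lam k m hm) = 0 := by simp [coord, map_zero]

theorem coord_add (j : Fin m) (x y : Lam k m hm) :
    coord k j (x + y) = coord k j x + coord k j y := by
  simp [coord, map_add]

theorem coord_smul (j : Fin m) (c : k) (x : Lam k m hm) :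
    coord k j (c • x) = c * coord k j x := by
  simp [coord, map_smul]

theorem coord_e (j v : Fin m) :
    coord k j (gL k m hm (e v)) = if j = v then 1 else 0 := by
  unfold coord
  rw [Φ_gL]
  show eMap k m v (unitV k m ⟨0, by omega⟩ j) _ = _
  rw [eMap_unitV]
  split_ifs with h1
  · show (if ((⟨0, by omega⟩, j) : Fin m × Fin m) = (⟨0, by omega⟩, j) then (1 : k) else 0) = 1
    rw [if_pos rfl]
  · rfl

theorem coord_of_sum (c : Fin m → k) (l : Fin m) :
    coord k l (∑ j, c j • gL k m hm (e j)) = c l := by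
  have h1 : coord k l (∑ j, c j • gL k m hm (e j))
      = ∑ j, c j * coord k l (gL k m hm (e j)) := by
    simp [coord, map_sum, map_smul]
  rw [h1]
  simp only [coord_e, mul_ite, mul_one, mul_zero]
  rw [Finset.sum_ite_eq Finset.univ l c]
  simp

theorem span_repr {x : Lam k m hm} (hx : x ∈ Submodule.span k (Set.range (eL k m hm))) :
    x = ∑ j, coord k j x • gL k m hm (e j) := by
  refine Submodule.span_induction
    (p := fun x _ => x = ∑ j, coord k j x • gL k m hm (e j)) ?_ ?_ ?_ ?_ hx
  · rintro z ⟨v, rfl⟩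
    rw [← gL_e v]
    simp only [coord_e, ite_smul, one_smul, zero_smul]
    rw [Finset.sum_ite_eq' Finset.univ v (fun j => gL k m hm (e j))]
    simp
  · simp only [coord_zero, zero_smul, Finset.sum_const_zero]
  · intro a b _ _ ha hb
    simp only [coord_add, add_smul, Finset.sum_add_distrib]
    rw [← ha, ← hb]
  · intro c a _ ha
    simp only [coord_smul, mul_smul]
    rw [← Finset.smul_sum, ← ha]

theorem sum_e_mul (c d : Fin m → k) :
    (∑ j, c j • gL k m hm (e j)) * (∑ j, d j • gL k m hm (e j))
      = ∑ j, (c j * d j) • gL k m hm (e j) := by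
  rw [Finset.sum_mul]
  refine Finset.sum_congr rfl ?_
  intro j _
  rw [Finset.mul_sum]
  rw [Finset.sum_eq_single j]
  · rw [smul_mul_smul_comm, e_mul_e, if_pos rfl]
  · intro l _ hl
    rw [smul_mul_smul_comm, e_mul_e, if_neg (fun hh => hl hh.symm), smul_zero]
  · intro hj; exact absurd (Finset.mem_univ j) hj

end ActSec

section CwordSec

/-- The next vertex along the cycle (choosing branch `0` at vertex `2`). -/
def nxt (m : ℕ) (hm : 4 ≤ m) (v : Fin m) : Fin m :=
  if v.val = 2 then ⟨0, Nat.lt_of_le_of_lt (Nat.zero_le _) v.isLt⟩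
  else if v.val ≤ 1 then ⟨m - 1, by omega⟩
  else ⟨v.val - 1, Nat.lt_of_le_of_lt (Nat.sub_le _ _) v.isLt⟩

/-- The arrow out of a vertex along the cycle. -/
def arrowOf (m : ℕ) (v : Fin m) : LamGen m :=
  if v.val = 2 then .α 0 else if v.val = 0 then .δ 0 else if v.val = 1 then .δ 1 else .β v

/-- Walk `n` steps along the cycle. -/
def walk (m : ℕ) (hm : 4 ≤ m) : Fin m → ℕ → List (LamGen m)
  | _, 0 => []
  | v, n + 1 => arrowOf m v :: walk m hm (nxt m hm v) n

/-- End vertex of the `n`-step walk. -/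
def endv (m : ℕ) (hm : 4 ≤ m) : Fin m → ℕ → Fin m
  | v, 0 => v
  | v, n + 1 => endv m hm (nxt m hm v) n

/-- The canonical path from `i` to `j`, of length `Dd m i j`. -/
def cword (m : ℕ) (hm : 4 ≤ m) (i j : Fin m) : List (LamGen m) :=
  if j.val = 1 then (if i = j then [] else walk m hm i (Dd m i ⟨2, by omega⟩) ++ [.α 1])
  else walk m hm i (Dd m i j)

variable {m : ℕ} {hm : 4 ≤ m}

theorem arr_arrowOf (v : Fin m) : Arr m hm v (arrowOf m v) (nxt m hm v) := by
  have hvlt := v.isLt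
  by_cases h1 : v.val = 2
  · have hv : v = ⟨2, by omega⟩ := Fin.ext h1
    rw [hv]
    exact Arr.alpha 0
  · by_cases h2 : v.val = 0
    · have hv : v = ⟨0, by omega⟩ := Fin.ext h2
      rw [hv]
      exact Arr.delta 0
    · by_cases h3 : v.val = 1
      · have hv : v = ⟨1, by omega⟩ := Fin.ext h3
        rw [hv]
        exact Arr.delta 1
      · have ha : arrowOf m v = .β v := by
          unfold arrowOf; rw [if_neg h1, if_neg h2, if_neg h3]
        have hn : nxt m hm v = ⟨v.val - 1, Nat.lt_of_le_of_lt (Nat.sub_le _ _) v.isLt⟩ := by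
          unfold nxt; rw [if_neg h1, if_neg (by omega)]
        rw [ha, hn]
        exact Arr.beta v (by omega)

theorem walk_isPath (v : Fin m) (n : ℕ) :
    IsPath m hm v (walk m hm v n) (endv m hm v n) := by
  induction n generalizing v with
  | zero => exact IsPath.nil v
  | succ n ih => exact IsPath.cons (arr_arrowOf v) (ih (nxt m hm v))

theorem walk_length (v : Fin m) (n : ℕ) : (walk m hm v n).length = n := by
  induction n generalizing v with
  | zero => rfl
  | succ n ih => simp [walk, ih]

theorem nxt_val_ne_one (v : Fin m) : (nxt m hm v).val ≠ 1 := by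
  have hm4 : 4 ≤ m := hm
  have hvlt := v.isLt
  unfold nxt
  split_ifs with h1 h2 <;> show _ ≠ _ <;> simp <;> omega

theorem endv_ne_one (n : ℕ) (v : Fin m) (hn : 1 ≤ n) : (endv m hm v n).val ≠ 1 := by
  induction n generalizing v with
  | zero => omega
  | succ n ih =>
      show (endv m hm (nxt m hm v) n).val ≠ 1
      rcases Nat.eq_zero_or_pos n with h0 | h0
      · subst h0; exact nxt_val_ne_one v
      · exact ih (nxt m hm v) h0

theorem pos_inj {u w : Fin m} (hm4 : 4 ≤ m) (hu : u.val ≠ 1) (hw : w.val ≠ 1)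
    (h : pos m u = pos m w) : u = w := by
  have h1 := u.isLt; have h2 := w.isLt
  apply Fin.ext
  unfold pos at h; split_ifs at h <;> omega

theorem mod_unique {p q c c' M : ℕ} (hp : p < M) (hq : q < M)
    (h : p + M * c = q + M * c') : p = q := by
  rcases le_total c c' with hcc | hcc
  · obtain ⟨d, rfl⟩ := Nat.exists_eq_add_of_le hcc
    rw [Nat.mul_add] at h
    rcases Nat.eq_zero_or_pos d with h0 | h0
    · subst h0; simp at h; omega
    · have := Nat.le_mul_of_pos_right M h0; omega
  · obtain ⟨d, rfl⟩ := Nat.exists_eq_add_of_le hcc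
    rw [Nat.mul_add] at h
    rcases Nat.eq_zero_or_pos d with h0 | h0
    · subst h0; simp at h; omega
    · have := Nat.le_mul_of_pos_right M h0; omega

theorem endv_Dd {i j : Fin m} (hj : j.val ≠ 1) : endv m hm i (Dd m i j) = j := by
  have hm4 : 4 ≤ m := hm
  obtain ⟨c, hc⟩ := path_pos (walk_isPath (hm := hm) i (Dd m i j))
  rw [walk_length] at hc
  obtain ⟨c', _, hc'⟩ := Dd_pos_eq hm4 i j
  have hpe := pos_lt hm4 (endv m hm i (Dd m i j))
  have hpj := pos_lt hm4 j
  have hpos : pos m (endv m hm i (Dd m i j)) = pos m j :=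
    mod_unique hpe hpj (show _ + (m-1) * c = _ + (m-1) * c' by omega)
  by_cases hD0 : Dd m i j = 0
  · have hij : i = j := (Dd_eq_zero_iff hm4).mp hD0
    rw [hD0]
    exact hij
  · exact pos_inj hm4 (endv_ne_one _ _ (by omega)) hj hpos

theorem cword_spec (i j : Fin m) :
    IsPath m hm i (cword m hm i j) j ∧ (cword m hm i j).length = Dd m i j := by
  have hm4 : 4 ≤ m := hm
  unfold cword
  split_ifs with h1 h2
  · subst h2
    exact ⟨IsPath.nil i, by simp [Dd]⟩
  · have hj : j = ⟨1, by omega⟩ := Fin.ext h1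
    have he : endv m hm i (Dd m i ⟨2, by omega⟩) = ⟨2, by omega⟩ :=
      endv_Dd (by simp)
    constructor
    · have hp := walk_isPath (hm := hm) i (Dd m i ⟨2, by omega⟩)
      rw [he] at hp
      refine hp.append ?_
      rw [hj]
      exact IsPath.cons (Arr.alpha 1) (IsPath.nil _)
    · rw [List.length_append, walk_length]
      -- arithmetic : Dd i ⟨2⟩ + 1 = Dd i j when j.val = 1, i ≠ j
      have hpi := pos_lt hm4 i
      have hilt := i.isLt
      have hne : i.val ≠ j.val := fun hh => h2 (Fin.ext hh)
      have hi2 : pos m i ≠ 0 ∨ i.val = 2 := by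
        unfold pos; split_ifs <;> omega
      simp only [Dd, if_neg h2]
      have hij2 : (i = (⟨2, by omega⟩ : Fin m)) ↔ i.val = 2 := by
        constructor
        · intro h; rw [h]
        · intro h; exact Fin.ext h
      split_ifs with ha hb hc hd h582 <;>
        simp_all [pos, Fin.ext_iff] <;> split_ifs at * <;> omega
  · have he : endv m hm i (Dd m i j) = j := endv_Dd h1
    constructor
    · have hp := walk_isPath (hm := hm) i (Dd m i j)
      rw [he] at hp
      exact hp
    · exact walk_length i _

end CwordSec

section TripleSec
variable {k : Type*} [Field k] {m : ℕ} {hm : 4 ≤ m}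

theorem triple_exists {i j l : Fin m} (hD : Dd m i j + Dd m j l ≤ m - 1) :
    ∃ x y : Lam k m hm,
      gL k m hm (e i) * x * gL k m hm (e j) * y * gL k m hm (e l) ≠ 0 := by
  have hm4 : 4 ≤ m := hm
  obtain ⟨hp1, hl1⟩ := cword_spec (hm := hm) i j
  obtain ⟨hp2, hl2⟩ := cword_spec (hm := hm) j l
  refine ⟨pathL k i (cword m hm i j) hm, pathL k j (cword m hm j l) hm, ?_⟩
  rw [e_mul_pathL, if_pos rfl, pathL_mul_e hp1, pathL_mul_pathL hp1 hp2,
    pathL_mul_e (hp1.append hp2)]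
  exact pathL_ne_zero (hp1.append hp2) (by rw [List.length_append]; omega)

theorem Dd_pair (hm4 : 4 ≤ m) {i j : Fin m} (hij : i ≠ j) :
    m ≤ Dd m i j + Dd m j i ↔ (i.val ≤ 1 ∧ j.val ≤ 1) := by
  have hpi := pos_lt hm4 i; have hpj := pos_lt hm4 j
  have hilt := i.isLt; have hjlt := j.isLt
  have hji : j ≠ i := fun hh => hij hh.symm
  constructor
  · intro h
    by_cases hp : pos m i = pos m j
    · unfold pos at hp; split_ifs at hp <;> omega
    · exfalso
      simp only [Dd, if_neg hij, if_neg hji] at h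
      split_ifs at h <;> omega
  · intro h
    have hp : pos m i = pos m j := by unfold pos; split_ifs <;> omega
    simp only [Dd, if_neg hij, if_neg hji, hp]
    split_ifs <;> omega

theorem Dd_x_low (hm4 : 4 ≤ m) {x b : Fin m} (hx : 2 ≤ x.val) (hb : b.val ≤ 1) :
    Dd m x b = x.val - 1 := by
  have hxlt := x.isLt
  have hxb : x ≠ b := fun h => by rw [h] at hx; omega
  simp only [Dd, if_neg hxb]
  unfold pos
  split_ifs <;> omega

theorem Dd_low_x (hm4 : 4 ≤ m) {x b : Fin m} (hx : 2 ≤ x.val) (hb : b.val ≤ 1) :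
    Dd m b x = m - x.val := by
  have hxlt := x.isLt
  have hbx : b ≠ x := fun h => by rw [← h] at hx; omega
  simp only [Dd, if_neg hbx]
  unfold pos
  split_ifs <;> omega

end TripleSec

end S4

/-- Every automorphism of `Λ_m` preserving the linear span `S` of
the primitive idempotents `e₁,…,e_m` either fixes all the idempotents, or
interchanges `e₁` and `e₂` (indices `0` and `1` here) while fixing `e₃,…,e_m`. -/
theorem stmt_4 (k : Type*) [Field k] [IsAlgClosed k] (m : ℕ) (hm : 4 ≤ m)
    (f : Lam k m hm ≃ₐ[k] Lam k m hm)
    (hf : ∀ i : Fin m, f (eL k m hm i) ∈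
      Submodule.span k (Set.range (eL k m hm))) :
    (∀ i : Fin m, f (eL k m hm i) = eL k m hm i) ∨
    (f (eL k m hm ⟨0, by omega⟩) = eL k m hm ⟨1, by omega⟩ ∧
     f (eL k m hm ⟨1, by omega⟩) = eL k m hm ⟨0, by omega⟩ ∧
     ∀ i : Fin m, 2 ≤ i.val → f (eL k m hm i) = eL k m hm i) := by
  classical
  have hm4 : 4 ≤ m := hm
  simp only [← S4.gL_e] at hf ⊢
  -- the coordinate matrix of the images of the idempotents
  set a : Fin m → Fin m → k := fun i j => S4.coord k j (f (S4.gL k m hm (LamGen.e i))) with ha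
  have hrep : ∀ i, f (S4.gL k m hm (LamGen.e i)) = ∑ j, a i j • S4.gL k m hm (LamGen.e j) :=
    fun i => S4.span_repr (hf i)
  have hmul : ∀ i i', f (S4.gL k m hm (LamGen.e i)) * f (S4.gL k m hm (LamGen.e i'))
      = if i = i' then f (S4.gL k m hm (LamGen.e i)) else 0 := by
    intro i i'
    rw [← map_mul, S4.e_mul_e, apply_ite f, map_zero]
  have horth : ∀ i i' j, a i j * a i' j = if i = i' then a i j else 0 := by
    intro i i' j
    have h2 : (∑ l, a i l • S4.gL k m hm (LamGen.e l)) * (∑ l, a i' l • S4.gL k m hm (LamGen.e l))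
        = if i = i' then f (S4.gL k m hm (LamGen.e i)) else 0 := by
      rw [← hrep i, ← hrep i']; exact hmul i i'
    have h1 := congrArg (S4.coord k j) h2
    rw [S4.sum_e_mul, S4.coord_of_sum, apply_ite (S4.coord k j), hrep i, S4.coord_of_sum,
      S4.coord_zero] at h1
    exact h1
  have hsum : ∀ j, (∑ i, a i j) = 1 := by
    intro j
    have h0 : (∑ i, f (S4.gL k m hm (LamGen.e i))) = f 1 := by rw [← map_sum, S4.sum_e]
    have h2 : (∑ l, (∑ i, a i l) • S4.gL k m hm (LamGen.e l))
        = ∑ l, (1 : k) • S4.gL k m hm (LamGen.e l) := by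
      calc ∑ l, (∑ i, a i l) • S4.gL k m hm (LamGen.e l)
          = ∑ l, ∑ i, a i l • S4.gL k m hm (LamGen.e l) :=
            Finset.sum_congr rfl fun l _ => Finset.sum_smul
        _ = ∑ i, ∑ l, a i l • S4.gL k m hm (LamGen.e l) := Finset.sum_comm
        _ = ∑ i, f (S4.gL k m hm (LamGen.e i)) :=
            Finset.sum_congr rfl fun i _ => (hrep i).symm
        _ = f 1 := h0
        _ = 1 := map_one f
        _ = ∑ l, (1 : k) • S4.gL k m hm (LamGen.e l) := by
            simp only [one_smul]; exact S4.sum_e.symm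
    have h3 := congrArg (S4.coord k j) h2
    rw [S4.coord_of_sum, S4.coord_of_sum] at h3
    exact h3
  have h01 : ∀ i j, a i j = 0 ∨ a i j = 1 := by
    intro i j
    have h := horth i i j
    rw [if_pos rfl] at h
    have h2 : a i j * (a i j - 1) = 0 := by rw [mul_sub, mul_one, h, sub_self]
    rcases mul_eq_zero.mp h2 with h3 | h3
    · exact Or.inl h3
    · exact Or.inr (sub_eq_zero.mp h3)
  have hτ : ∀ j, ∃ i, a i j = 1 := by
    intro j
    obtain ⟨i, _, hne⟩ := Finset.exists_ne_zero_of_sum_ne_zero (s := Finset.univ)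
      (f := fun i => a i j) (by rw [hsum j]; exact one_ne_zero)
    exact ⟨i, (h01 i j).resolve_left hne⟩
  choose τ hτ1 using hτ
  have hτu : ∀ i j, i ≠ τ j → a i j = 0 := by
    intro i j hne
    have h := horth i (τ j) j
    rw [if_neg hne, hτ1 j, mul_one] at h
    exact h
  have hene : ∀ i : Fin m, S4.gL k m hm (LamGen.e i) ≠ 0 := by
    intro i h0
    have h1 : S4.coord k i (S4.gL k m hm (LamGen.e i)) = 1 := by rw [S4.coord_e, if_pos rfl]
    rw [h0, S4.coord_zero] at h1
    exact zero_ne_one h1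
  have hτsurj : Function.Surjective τ := by
    intro i
    by_contra hns
    push_neg at hns
    have hz : f (S4.gL k m hm (LamGen.e i)) = 0 := by
      rw [hrep i]
      refine Finset.sum_eq_zero fun j _ => ?_
      rw [hτu i j (fun hh => hns j hh.symm), zero_smul]
    exact hene i (f.injective (by rw [hz, map_zero]))
  have hτbij : Function.Bijective τ := Finite.surjective_iff_bijective.mp hτsurj
  set E : Fin m ≃ Fin m := Equiv.ofBijective τ hτbij with hE
  have hτE : ∀ x, τ x = E x := fun x => rfl
  have hfe : ∀ i, f (S4.gL k m hm (LamGen.e i)) = S4.gL k m hm (LamGen.e (E.symm i)) := by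
    intro i
    rw [hrep i]
    have hco : ∀ j, a i j = if j = E.symm i then (1 : k) else 0 := by
      intro j
      split_ifs with h
      · subst h
        have h2 := hτ1 (E.symm i)
        rwa [hτE, E.apply_symm_apply] at h2
      · refine hτu i j fun hh => h ?_
        rw [hh, hτE, E.symm_apply_apply]
    calc ∑ j, a i j • S4.gL k m hm (LamGen.e j)
        = ∑ j, (if j = E.symm i then (1 : k) else 0) • S4.gL k m hm (LamGen.e j) :=
          Finset.sum_congr rfl fun j _ => by rw [hco j]
      _ = S4.gL k m hm (LamGen.e (E.symm i)) := by
          simp only [ite_smul, one_smul, zero_smul]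
          rw [Finset.sum_ite_eq' Finset.univ (E.symm i) (fun j => S4.gL k m hm (LamGen.e j))]
          simp
  have hfe' : ∀ v, f.symm (S4.gL k m hm (LamGen.e v)) = S4.gL k m hm (LamGen.e (E v)) := by
    intro v
    have h2 := hfe (E v)
    rw [Equiv.symm_apply_apply] at h2
    rw [← h2, AlgEquiv.symm_apply_apply]
  -- transport of the triple-vanishing relation
  have hT1 : ∀ i j l : Fin m, m ≤ S4.Dd m i j + S4.Dd m j l →
      ∀ x y : Lam k m hm, S4.gL k m hm (LamGen.e i) * x * S4.gL k m hm (LamGen.e j) * y *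
        S4.gL k m hm (LamGen.e l) = 0 :=
    fun i j l h x y => S4.triple_zero h x y
  have hT2 : ∀ i j l : Fin m, S4.Dd m i j + S4.Dd m j l ≤ m - 1 →
      ¬ (∀ x y : Lam k m hm, S4.gL k m hm (LamGen.e i) * x * S4.gL k m hm (LamGen.e j) * y *
        S4.gL k m hm (LamGen.e l) = 0) := by
    intro i j l h hT
    obtain ⟨x, y, hxy⟩ := S4.triple_exists (k := k) (hm := hm) h
    exact hxy (hT x y)
  have htrans : ∀ i j l : Fin m,
      (∀ x y : Lam k m hm, S4.gL k m hm (LamGen.e i) * x * S4.gL k m hm (LamGen.e j) * y *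
        S4.gL k m hm (LamGen.e l) = 0) →
      (∀ x y : Lam k m hm, S4.gL k m hm (LamGen.e (E.symm i)) * x *
        S4.gL k m hm (LamGen.e (E.symm j)) * y * S4.gL k m hm (LamGen.e (E.symm l)) = 0) := by
    intro i j l hT x y
    have h0 := congrArg f (hT (f.symm x) (f.symm y))
    rw [map_zero, map_mul, map_mul, map_mul, map_mul, hfe, hfe, hfe,
      AlgEquiv.apply_symm_apply, AlgEquiv.apply_symm_apply] at h0
    exact h0
  have htrans' : ∀ i j l : Fin m,
      (∀ x y : Lam k m hm, S4.gL k m hm (LamGen.e (E.symm i)) * x *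
        S4.gL k m hm (LamGen.e (E.symm j)) * y * S4.gL k m hm (LamGen.e (E.symm l)) = 0) →
      (∀ x y : Lam k m hm, S4.gL k m hm (LamGen.e i) * x * S4.gL k m hm (LamGen.e j) * y *
        S4.gL k m hm (LamGen.e l) = 0) := by
    intro i j l hT x y
    have h0 := congrArg f.symm (hT (f x) (f y))
    rw [map_zero, map_mul, map_mul, map_mul, map_mul, hfe', hfe', hfe',
      AlgEquiv.symm_apply_apply, AlgEquiv.symm_apply_apply,
      Equiv.apply_symm_apply, Equiv.apply_symm_apply, Equiv.apply_symm_apply] at h0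
    exact h0
  have hQ : ∀ i j l : Fin m,
      (m ≤ S4.Dd m (E.symm i) (E.symm j) + S4.Dd m (E.symm j) (E.symm l)) ↔
        (m ≤ S4.Dd m i j + S4.Dd m j l) := by
    intro i j l
    constructor
    · intro h
      by_contra hne
      exact hT2 i j l (by omega) (htrans' i j l (hT1 _ _ _ h))
    · intro h
      by_contra hne
      exact hT2 _ _ _ (by omega) (htrans i j l (hT1 i j l h))
  -- combinatorics: the permutation E.symm is the identity or the swap of 0,1
  have hσinj : Function.Injective E.symm := E.symm.injective
  let v0 : Fin m := ⟨0, by omega⟩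
  let v1 : Fin m := ⟨1, by omega⟩
  have hv01 : v0 ≠ v1 := Fin.ne_of_val_ne (show (0 : ℕ) ≠ 1 by omega)
  have hlow : (E.symm v0).val ≤ 1 ∧ (E.symm v1).val ≤ 1 := by
    have h1 : m ≤ S4.Dd m v0 v1 + S4.Dd m v1 v0 :=
      (S4.Dd_pair hm4 hv01).mpr ⟨Nat.zero_le 1, le_refl 1⟩
    have h2 := (hQ v0 v1 v0).mpr h1
    exact (S4.Dd_pair hm4 (fun hh => hv01 (hσinj hh))).mp h2
  have hσ01 : E.symm v0 ≠ E.symm v1 := fun h => hv01 (hσinj h)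
  have hhigh : ∀ u : Fin m, 2 ≤ u.val → 2 ≤ (E.symm u).val := by
    intro u hu
    by_contra hc
    push_neg at hc
    have hd0 : E.symm u ≠ E.symm v0 := fun h => by
      have hv := congrArg Fin.val (hσinj h)
      have : u.val = 0 := hv
      omega
    have hd1 : E.symm u ≠ E.symm v1 := fun h => by
      have hv := congrArg Fin.val (hσinj h)
      have : u.val = 1 := hv
      omega
    have e1 : (E.symm u).val ≠ (E.symm v0).val := fun h => hd0 (Fin.ext h)
    have e2 : (E.symm u).val ≠ (E.symm v1).val := fun h => hd1 (Fin.ext h)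
    have e3 : (E.symm v0).val ≠ (E.symm v1).val := fun h => hσ01 (Fin.ext h)
    have := hlow.1; have := hlow.2
    omega
  have hmono : ∀ u w : Fin m, 2 ≤ u.val → 2 ≤ w.val →
      ((E.symm w).val < (E.symm u).val ↔ w.val < u.val) := by
    intro u w hu hw
    have hq := hQ u v0 w
    have hσu := hhigh u hu
    have hσw := hhigh w hw
    have hσv0 : (E.symm v0).val ≤ 1 := hlow.1
    rw [S4.Dd_x_low hm4 hσu hσv0, S4.Dd_low_x hm4 hσw hσv0,
      S4.Dd_x_low hm4 hu (Nat.zero_le 1), S4.Dd_low_x hm4 hw (Nat.zero_le 1)] at hq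
    have hult := u.isLt; have hwlt := w.isLt
    have hσult := (E.symm u).isLt; have hσwlt := (E.symm w).isLt
    constructor
    · intro h
      have h2 := hq.mp (by omega)
      omega
    · intro h
      have h2 := hq.mpr (by omega)
      omega
  have hfix : ∀ u : Fin m, 2 ≤ u.val → E.symm u = u := by
    have hglt : ∀ x : Fin (m - 2), (E.symm ⟨x.val + 2, by omega⟩).val - 2 < m - 2 := by
      intro x
      have h1 := (E.symm (⟨x.val + 2, by omega⟩ : Fin m)).isLt
      omega
    set g : Fin (m - 2) → Fin (m - 2) :=
      fun x => ⟨(E.symm ⟨x.val + 2, by omega⟩).val - 2, hglt x⟩ with hg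
    have hgm : StrictMono g := by
      intro x y hxy
      have hxy' : (⟨x.val + 2, by omega⟩ : Fin m).val < (⟨y.val + 2, by omega⟩ : Fin m).val := by
        show x.val + 2 < y.val + 2
        have := (Fin.lt_def).mp hxy
        omega
      have h := (hmono ⟨y.val + 2, by omega⟩ ⟨x.val + 2, by omega⟩
        (show 2 ≤ y.val + 2 by omega) (show 2 ≤ x.val + 2 by omega)).mpr hxy'
      have h2x := hhigh ⟨x.val + 2, by omega⟩ (show 2 ≤ x.val + 2 by omega)
      have h2y := hhigh ⟨y.val + 2, by omega⟩ (show 2 ≤ y.val + 2 by omega)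
      show (⟨_, hglt x⟩ : Fin (m - 2)) < ⟨_, hglt y⟩
      rw [Fin.mk_lt_mk]
      omega
    have hgsurj : Function.Surjective g := Finite.injective_iff_surjective.mp hgm.injective
    have hgid : g = id := by
      haveI : WellFoundedLT (Fin (m - 2)) := Finite.to_wellFoundedLT
      refine (hgm.range_inj strictMono_id).mp ?_
      have hu1 : Set.range g = Set.univ := Set.range_eq_univ.mpr hgsurj
      have hu2 : Set.range (id : Fin (m - 2) → Fin (m - 2)) = Set.univ :=
        Set.range_eq_univ.mpr (fun x => ⟨x, rfl⟩)
      rw [hu1, hu2]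
    intro u hu
    have hlt : u.val - 2 < m - 2 := by have := u.isLt; omega
    have h1 := congrFun hgid (⟨u.val - 2, hlt⟩ : Fin (m - 2))
    have h2 := congrArg Fin.val h1
    have h3 : (⟨(⟨u.val - 2, hlt⟩ : Fin (m - 2)).val + 2, by omega⟩ : Fin m) = u :=
      Fin.ext (show u.val - 2 + 2 = u.val by omega)
    rw [hg] at h2
    simp only at h2
    rw [h3] at h2
    have h4 : (E.symm u).val - 2 = u.val - 2 := h2
    have h5 := hhigh u hu
    exact Fin.ext (by omega)
  have hcase : (E.symm v0).val = 0 ∨ (E.symm v0).val = 1 := by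
    have := hlow.1; omega
  rcases hcase with hA | hB
  · left
    have hs0 : E.symm v0 = v0 := Fin.ext (show (E.symm v0).val = 0 from hA)
    have hs1 : E.symm v1 = v1 := by
      have hnev : (E.symm v1).val ≠ (E.symm v0).val := fun h => hσ01 (Fin.ext h).symm
      have := hlow.2
      exact Fin.ext (show (E.symm v1).val = 1 by omega)
    intro i
    rcases Nat.lt_or_ge i.val 2 with hi | hi
    · have hii : i = v0 ∨ i = v1 := by
        rcases (show i.val = 0 ∨ i.val = 1 by omega) with h | h
        · exact Or.inl (Fin.ext h)
        · exact Or.inr (Fin.ext h)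
      rcases hii with rfl | rfl
      · rw [hfe, show E.symm v0 = v0 from hs0]
      · rw [hfe, show E.symm v1 = v1 from hs1]
    · rw [hfe, show E.symm i = i from hfix i hi]
  · right
    have hs0 : E.symm v0 = v1 := Fin.ext (show (E.symm v0).val = 1 from hB)
    have hs1 : E.symm v1 = v0 := by
      have hnev : (E.symm v1).val ≠ (E.symm v0).val := fun h => hσ01 (Fin.ext h).symm
      have := hlow.2
      exact Fin.ext (show (E.symm v1).val = 0 by omega)
    refine ⟨?_, ?_, ?_⟩
    · rw [hfe, show E.symm v0 = v1 from hs0]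
    · rw [hfe, show E.symm v1 = v0 from hs1]
    · intro i hi
      rw [hfe, show E.symm i = i from hfix i hi]
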